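/- Let λ ∈ ℂ with Re λ ≠ 0 and let f : ℝ → ℂ be bounded and continuous. Define x(t) = ∫_{−∞}^{∞} g_{t−s}(λ) f(s) ds. Then x is bounded on ℝ, differentiable with continuous derivative, and satisfies x′(t) = λ x(t) + f(t) for all t ∈ ℝ; moreover, x is the unique bounded differentiable function ℝ → ℂ satisfying this differential equation. -/

import Mathlib

open Complex MeasureTheory

/-- The scalar Green's function `g_t(λ)`: for `t > 0` (and `t = 0`), `g_t(λ) = e^{λ t}` if
`Re λ < 0` and `g_t(λ) = 0` if `Re λ > 0`; for `t < 0`, `g_t(λ) = −e^{λ t}` if `Re λ > 0`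
and `g_t(λ) = 0` if `Re λ < 0`. -/
noncomputable def greenG (t : ℝ) (lam : ℂ) : ℂ :=
  if 0 ≤ t then (if lam.re < 0 then Complex.exp (lam * t) else 0)
  else (if 0 < lam.re then -Complex.exp (lam * t) else 0)

open Set Filter in
lemma myIntegrableOn_exp_Iic {b : ℝ} (hb : 0 < b) (t : ℝ) :
    IntegrableOn (fun s : ℝ => Real.exp (b * s)) (Iic t) := by
  have h := exp_neg_integrableOn_Ioi (-t) hb
  have hmap : (volume.restrict (Ioi (-t))).map Neg.neg = volume.restrict (Iic t) := by
    conv_rhs => rw [← Measure.map_neg_eq_self (volume : Measure ℝ),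
      measurableEmbedding_neg.restrict_map]
    rw [show (Neg.neg ⁻¹' Iic t : Set ℝ) = Ici (-t) by ext x; simp [neg_le],
      MeasureTheory.restrict_Ioi_eq_restrict_Ici]
  rw [IntegrableOn, ← hmap, measurableEmbedding_neg.integrable_map_iff]
  have : ((fun s : ℝ => Real.exp (b * s)) ∘ Neg.neg) = fun x : ℝ => Real.exp (-b * x) := by
    funext x; simp only [Function.comp_apply]; congr 1; ring
  rw [this]; exact h

open Set Filter in
lemma mySetIntegral_exp_Iic {b : ℝ} (hb : 0 < b) (t : ℝ) :
    ∫ s in Iic t, Real.exp (b * s) = b⁻¹ * Real.exp (b * t) := by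
  have h1 : ∫ s in Iic t, Real.exp (b * s) = ∫ x in Ioi (-t), Real.exp (-(b * x)) := by
    rw [← integral_comp_neg_Iic t (fun x => Real.exp (-(b * x)))]
    congr 1; funext s; congr 1; ring
  have h2 := integral_comp_mul_left_Ioi (fun x => Real.exp (-x)) (-t) hb
  simp only [smul_eq_mul] at h2
  rw [h1,
    show (∫ x in Ioi (-t), Real.exp (-(b * x)))
      = ∫ x in Ioi (-t), (fun y => Real.exp (-y)) (b * x) from rfl,
    h2, integral_exp_neg_Ioi]
  congr 1; ring

open Set Filter in
lemma myHomogeneous (lam : ℂ) (hlam : lam.re ≠ 0) (z : ℝ → ℂ) (C : ℝ)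
    (hz : ∀ t : ℝ, ‖z t‖ ≤ C)
    (hd : ∀ t : ℝ, HasDerivAt z (lam * z t) t) : ∀ t : ℝ, z t = 0 := by
  set w : ℝ → ℂ := fun u => Complex.exp (-(lam * u)) * z u with hw
  have hwd : ∀ u : ℝ, HasDerivAt w 0 u := by
    intro u
    have h1 : HasDerivAt (fun v : ℝ => Complex.exp (-(lam * v)))
        (Complex.exp (-(lam * u)) * (-lam)) u := by
      have : HasDerivAt (fun v : ℝ => -(lam * v)) (-lam) u := by
        exact (((hasDerivAt_id u).ofReal_comp.const_mul lam).neg).congr_deriv (by simp)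
      simpa using this.cexp
    have := h1.mul (hd u)
    refine this.congr_deriv ?_
    ring
  have hconst : ∀ u : ℝ, w u = w 0 := by
    intro u
    exact is_const_of_deriv_eq_zero (fun v => (hwd v).differentiableAt)
      (fun v => (hwd v).deriv) u 0
  have hzu : ∀ u : ℝ, z u = Complex.exp (lam * u) * z 0 := by
    intro u
    have h0 : w 0 = z 0 := by simp [hw]
    have := hconst u
    rw [h0, hw] at this
    rw [← this, ← mul_assoc, ← Complex.exp_add, add_neg_cancel, Complex.exp_zero, one_mul]
  have hz0 : z 0 = 0 := by
    by_contra h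
    have hnorm : ∀ u : ℝ, Real.exp (lam.re * u) * ‖z 0‖ ≤ C := by
      intro u
      have := hz u
      rw [hzu u, norm_mul, Complex.norm_exp] at this
      simpa [Complex.mul_re] using this
    have hsq : 0 < lam.re * lam.re := mul_self_pos.2 hlam
    have hzpos : 0 < ‖z 0‖ := norm_pos_iff.2 h
    have htend : Filter.Tendsto (fun r : ℝ => Real.exp (lam.re * (lam.re * r)) * ‖z 0‖)
        Filter.atTop Filter.atTop := by
      apply Filter.Tendsto.atTop_mul_const hzpos
      apply Real.tendsto_exp_atTop.comp
      have : (fun r : ℝ => lam.re * (lam.re * r)) = fun r => (lam.re * lam.re) * r := by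
        funext r; ring
      rw [this]
      exact Filter.tendsto_id.const_mul_atTop hsq
    obtain ⟨r, hr⟩ := (htend.eventually_gt_atTop C).exists
    exact absurd (hnorm (lam.re * r)) (not_le.2 hr)
  intro t
  rw [hzu t, hz0, mul_zero]

open Set Filter in
lemma myCore (lam : ℂ) (hneg : lam.re < 0) (f : ℝ → ℂ) (hf : Continuous f) (C : ℝ)
    (hfb : ∀ t : ℝ, ‖f t‖ ≤ C) :
    (∀ t : ℝ, ‖∫ s : ℝ, greenG (t - s) lam * f s‖ ≤ C / |lam.re|) ∧
    (∀ t : ℝ, HasDerivAt (fun u : ℝ => ∫ s : ℝ, greenG (u - s) lam * f s)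
      (lam * (∫ s : ℝ, greenG (t - s) lam * f s) + f t) t) := by
  set b : ℝ := -lam.re with hbdef
  have hb : 0 < b := by simp [hbdef]; linarith
  set φ : ℝ → ℂ := fun s => Complex.exp (-(lam * s)) * f s with hφdef
  have hφcont : Continuous φ :=
    (((continuous_const.mul Complex.continuous_ofReal).neg).cexp).mul hf
  have hφint : ∀ t : ℝ, IntegrableOn φ (Iic t) := by
    intro t
    apply Integrable.mono' ((myIntegrableOn_exp_Iic hb t).const_mul C)
      hφcont.aestronglyMeasurable.restrict
    refine Filter.Eventually.of_forall fun s => ?_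
    rw [hφdef]
    simp only [norm_mul, Complex.norm_exp]
    have h1 : (-(lam * (s : ℂ))).re = b * s := by
      simp [Complex.mul_re, hbdef]
    rw [h1, mul_comm C _]
    exact mul_le_mul_of_nonneg_left (hfb s) (Real.exp_pos _).le
  set H : ℝ → ℂ := fun t => ∫ s in Iic t, φ s with hHdef
  have hF : ∀ t : ℝ, (∫ s : ℝ, greenG (t - s) lam * f s)
      = Complex.exp (lam * t) * H t := by
    intro t
    have h1 : (∫ s : ℝ, greenG (t - s) lam * f s)
        = ∫ s in Iic t, Complex.exp (lam * t) * φ s := by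
      rw [← integral_indicator measurableSet_Iic]
      congr 1; funext s
      by_cases hst : s ≤ t
      · have h0 : (0:ℝ) ≤ t - s := by linarith
        have : Complex.exp (lam * t) * φ s = Complex.exp (lam * ((t:ℝ) - (s:ℝ))) * f s := by
          rw [hφdef, ← mul_assoc, ← Complex.exp_add]
          congr 2
          push_cast
          ring_nf
        simp only [greenG, if_pos h0, if_pos hneg, indicator_of_mem (mem_Iic.2 hst), this]
        push_cast
        ring_nf
      · have h0 : ¬ (0:ℝ) ≤ t - s := by intro h; exact hst (by linarith)
        simp [greenG, h0, indicator_of_notMem (fun h => hst (mem_Iic.1 h)),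
          not_lt.2 hneg.le, asymm hneg]
    rw [h1, integral_const_mul]
  have hHd : ∀ t : ℝ, HasDerivAt H (φ t) t := by
    intro t
    have key : H = fun u => H 0 + ∫ s in (0:ℝ)..u, φ s := by
      funext u
      rw [← intervalIntegral.integral_Iic_sub_Iic (hφint 0) (hφint u), hHdef]
      ring
    rw [key]
    exact ((hφcont.integral_hasStrictDerivAt 0 t).hasDerivAt).const_add (H 0)
  constructor
  · -- bound
    intro t
    have hC : 0 ≤ C := le_trans (norm_nonneg _) (hfb 0)
    rw [hF t, ← integral_const_mul]
    have hexp : Real.exp (lam.re * t) * Real.exp (b * t) = 1 := by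
      rw [← Real.exp_add, show lam.re * t + b * t = 0 by rw [hbdef]; ring, Real.exp_zero]
    calc ‖∫ s in Iic t, Complex.exp (lam * t) * φ s‖
        ≤ ∫ s in Iic t, ‖Complex.exp (lam * t) * φ s‖ := norm_integral_le_integral_norm _
      _ ≤ ∫ s in Iic t, (C * Real.exp (lam.re * t)) * Real.exp (b * s) := by
          apply setIntegral_mono_on (((hφint t).const_mul _).norm)
            ((myIntegrableOn_exp_Iic hb t).const_mul _) measurableSet_Iic
          intro s _
          simp only [hφdef, norm_mul, Complex.norm_exp]
          have e1 : (lam * (t : ℂ)).re = lam.re * t := by simp [Complex.mul_re]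
          have e2 : (-(lam * (s : ℂ))).re = b * s := by simp [Complex.mul_re, hbdef]
          rw [e1, e2]
          have h3 : Real.exp (lam.re * t) * (Real.exp (b * s) * ‖f s‖)
              ≤ Real.exp (lam.re * t) * (Real.exp (b * s) * C) := by
            gcongr
            exact hfb s
          calc Real.exp (lam.re * t) * (Real.exp (b * s) * ‖f s‖)
              ≤ Real.exp (lam.re * t) * (Real.exp (b * s) * C) := h3
            _ = (C * Real.exp (lam.re * t)) * Real.exp (b * s) := by ring
      _ = C / |lam.re| := by
          rw [integral_const_mul, mySetIntegral_exp_Iic hb t, abs_of_neg hneg]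
          calc (C * Real.exp (lam.re * t)) * (b⁻¹ * Real.exp (b * t))
              = C * b⁻¹ * (Real.exp (lam.re * t) * Real.exp (b * t)) := by ring
            _ = C / -lam.re := by rw [hexp, hbdef]; ring
  · intro t
    have hd1 : HasDerivAt (fun u : ℝ => Complex.exp (lam * u))
        (Complex.exp (lam * t) * lam) t := by
      have : HasDerivAt (fun u : ℝ => lam * (u : ℂ)) lam t := by
        simpa using (Complex.ofRealCLM.hasDerivAt (x := t)).const_mul lam
      simpa using this.cexp
    have hmul := hd1.mul (hHd t)
    have funeq : (fun u : ℝ => ∫ s : ℝ, greenG (u - s) lam * f s)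
        = fun u : ℝ => Complex.exp (lam * u) * H u := funext fun u => hF u
    rw [funeq, hF t]
    refine hmul.congr_deriv ?_
    rw [hφdef]
    have : Complex.exp (lam * t) * (Complex.exp (-(lam * t)) * f t) = f t := by
      rw [← mul_assoc, ← Complex.exp_add, add_neg_cancel, Complex.exp_zero, one_mul]
    rw [this]
    ring

open Set Filter in
lemma myGreenG_reflect {lam : ℂ} (hpos : 0 < lam.re) {u : ℝ} (hu : u ≠ 0) :
    greenG u lam = -greenG (-u) (-lam) := by
  rcases lt_or_gt_of_ne hu with h | h
  · have h1 : ¬ (0:ℝ) ≤ u := not_le.2 h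
    have h2 : (0:ℝ) ≤ -u := by linarith
    have h3 : (-lam).re < 0 := by simpa using hpos
    simp only [greenG, if_neg h1, if_pos hpos, if_pos h2, if_pos h3]
    congr 1
    push_cast
    ring_nf
  · have h1 : (0:ℝ) ≤ u := h.le
    have h2 : ¬ (0:ℝ) ≤ -u := by simp; linarith
    simp [greenG, h1, h2, not_lt.2 hpos.le, asymm (by simpa using hpos : (-lam).re < 0)]

open Set Filter in
lemma myReflect (lam : ℂ) (hpos : 0 < lam.re) (f : ℝ → ℂ) (t : ℝ) :
    (∫ s : ℝ, greenG (t - s) lam * f s)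
      = -(∫ s : ℝ, greenG (-t - s) (-lam) * f (-s)) := by
  have hae : ∀ᵐ s : ℝ, s ≠ t := by
    rw [ae_iff]
    have h0 : {s : ℝ | ¬ s ≠ t} = {t} := by ext x; simp
    rw [h0]
    exact measure_singleton t
  have h1 : (∫ s : ℝ, greenG (t - s) lam * f s)
      = ∫ s : ℝ, -(greenG (s - t) (-lam) * f s) := by
    apply integral_congr_ae
    filter_upwards [hae] with s hs
    rw [myGreenG_reflect hpos (sub_ne_zero.2 (fun h => hs (by linarith [h]))), neg_sub]
    ring
  have h2 : (∫ s : ℝ, greenG (-t - s) (-lam) * f (-s))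
      = ∫ s : ℝ, greenG (s - t) (-lam) * f s := by
    rw [← integral_neg_eq_self (fun s : ℝ => greenG (-t - s) (-lam) * f (-s)) volume]
    congr 1
    funext s
    rw [show -t - -s = s - t by ring, neg_neg]
  rw [h1, h2, integral_neg]

/-- Scalar version of **Theorem 10**: for `Re λ ≠ 0` and a bounded continuous `f : ℝ → ℂ`,
the function `x(t) = ∫_{−∞}^{∞} g_{t−s}(λ) f(s) ds` is bounded, continuously
differentiable, satisfies `x′(t) = λ x(t) + f(t)` for all `t`, and is the unique bounded
differentiable solution of this differential equation. -/
theorem greens_function_solves_bounded_solutions_problem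
    (lam : ℂ) (hlam : lam.re ≠ 0) (f : ℝ → ℂ) (hf : Continuous f)
    (hfb : ∃ C : ℝ, ∀ t : ℝ, ‖f t‖ ≤ C) :
    (∃ C : ℝ, ∀ t : ℝ, ‖∫ s : ℝ, greenG (t - s) lam * f s‖ ≤ C) ∧
    (∀ t : ℝ, HasDerivAt (fun u : ℝ => ∫ s : ℝ, greenG (u - s) lam * f s)
      (lam * (∫ s : ℝ, greenG (t - s) lam * f s) + f t) t) ∧
    Continuous (deriv (fun u : ℝ => ∫ s : ℝ, greenG (u - s) lam * f s)) ∧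
    (∀ y : ℝ → ℂ, (∃ C : ℝ, ∀ t : ℝ, ‖y t‖ ≤ C) →
      (∀ t : ℝ, HasDerivAt y (lam * y t + f t) t) →
      ∀ t : ℝ, y t = ∫ s : ℝ, greenG (t - s) lam * f s) := by
  obtain ⟨C, hfbC⟩ := hfb
  have hfb' : ∀ t : ℝ, ‖f t‖ ≤ C := fun t => by
    exact hfbC t
  have key : (∀ t : ℝ, ‖∫ s : ℝ, greenG (t - s) lam * f s‖ ≤ C / |lam.re|) ∧
      (∀ t : ℝ, HasDerivAt (fun u : ℝ => ∫ s : ℝ, greenG (u - s) lam * f s)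
        (lam * (∫ s : ℝ, greenG (t - s) lam * f s) + f t) t) := by
    rcases hlam.lt_or_gt with hneg | hpos
    · exact myCore lam hneg f hf C hfb'
    · set g : ℝ → ℂ := fun s => f (-s) with hgdef
      have hg : Continuous g := hf.comp continuous_neg
      have hgb : ∀ t : ℝ, ‖g t‖ ≤ C := fun t => hfb' (-t)
      have hμ : (-lam).re < 0 := by simpa using hpos
      obtain ⟨hbd', hder'⟩ := myCore (-lam) hμ g hg C hgb
      have hrefl : ∀ t : ℝ, (∫ s : ℝ, greenG (t - s) lam * f s)
          = -(∫ s : ℝ, greenG (-t - s) (-lam) * g s) := fun t => myReflect lam hpos f t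
      constructor
      · intro t
        rw [hrefl t, norm_neg]
        have := hbd' (-t)
        simpa using this
      · intro t
        have hneg1 : HasDerivAt (fun u : ℝ => -u) (-1 : ℝ) t := hasDerivAt_neg t
        have hcomp0 : HasDerivAt
            ((fun v : ℝ => ∫ s : ℝ, greenG (v - s) (-lam) * g s) ∘ (fun u : ℝ => -u))
            ((-1 : ℝ) • ((-lam) * (∫ s : ℝ, greenG (-t - s) (-lam) * g s) + g (-t))) t :=
          HasDerivAt.scomp t (hder' (-t)) hneg1
        have hcomp : HasDerivAt
            (fun u : ℝ => (fun v : ℝ => ∫ s : ℝ, greenG (v - s) (-lam) * g s) (-u))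
            ((-1 : ℝ) • ((-lam) * (∫ s : ℝ, greenG (-t - s) (-lam) * g s) + g (-t))) t :=
          hcomp0
        have hfuneq : (fun u : ℝ => ∫ s : ℝ, greenG (u - s) lam * f s)
            = fun u : ℝ => -((fun v : ℝ => ∫ s : ℝ, greenG (v - s) (-lam) * g s) (-u)) :=
          funext fun u => hrefl u
        rw [hfuneq]
        refine hcomp.neg.congr_deriv ?_
        have h2 : (∫ s : ℝ, greenG (-t - s) (-lam) * g s)
            = -(∫ s : ℝ, greenG (t - s) lam * f s) := by rw [hrefl t]; ring
        rw [h2]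
        have h3 : g (-t) = f t := by rw [hgdef]; simp
        rw [h3, neg_one_smul ℝ]
        ring
  obtain ⟨hbd, hder⟩ := key
  have hFdiff : Differentiable ℝ (fun u : ℝ => ∫ s : ℝ, greenG (u - s) lam * f s) :=
    fun t => (hder t).differentiableAt
  have hFcont := hFdiff.continuous
  refine ⟨⟨C / |lam.re|, fun t => by exact hbd t⟩,
    hder, ?_, ?_⟩
  · have hdeq : deriv (fun u : ℝ => ∫ s : ℝ, greenG (u - s) lam * f s)
        = fun t : ℝ => lam * (∫ s : ℝ, greenG (t - s) lam * f s) + f t :=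
      funext fun t => (hder t).deriv
    rw [hdeq]
    exact (continuous_const.mul hFcont).add hf
  · rintro y ⟨Cy, hyb⟩ hyd t
    set z : ℝ → ℂ := fun u => y u - (∫ s : ℝ, greenG (u - s) lam * f s) with hzdef
    have hzb : ∀ u : ℝ, ‖z u‖ ≤ Cy + C / |lam.re| := by
      intro u
      calc ‖z u‖ ≤ ‖y u‖ + ‖∫ s : ℝ, greenG (u - s) lam * f s‖ := norm_sub_le _ _
        _ ≤ Cy + C / |lam.re| := add_le_add
            (by exact hyb u) (hbd u)
    have hzd : ∀ u : ℝ, HasDerivAt z (lam * z u) u := by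
      intro u
      have := (hyd u).sub (hder u)
      refine this.congr_deriv ?_
      rw [hzdef]
      ring
    have hz0 := myHomogeneous lam hlam z (Cy + C / |lam.re|) hzb hzd t
    rw [hzdef] at hz0
    exact sub_eq_zero.1 hz0
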